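/- Let p ∈ (0,1) and let s ≤ ((1−p)/12)². Then for all sufficiently large n, the monic Chebyshev polynomial M_n(z) = 2^{1−n} cos(n arccos(z)) satisfies |M_n(z)| ≤ 2^{−pn} for every complex z with |z| ≤ 1 and |arg(z)| ≤ s. -/

import Mathlib

/-- The principal branch of the complex arccosine,
`arccos z = -i log (z + i (1 - z²)^(1/2))`. -/
noncomputable def carccos (z : ℂ) : ℂ :=
  -Complex.I * Complex.log (z + Complex.I * (1 - z ^ 2) ^ ((1 : ℂ) / 2))

open Complex Real in
lemma cos_carccos (z : ℂ) : Complex.cos (carccos z) = z := by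
  set u : ℂ := (1 - z ^ 2) ^ ((1 : ℂ) / 2) with hu
  have hu2 : u ^ 2 = 1 - z ^ 2 := by
    by_cases h : (1 : ℂ) - z ^ 2 = 0
    · rw [hu, h, zero_cpow (by norm_num)]; simp [h]
    · rw [hu, sq, ← cpow_add _ _ h]; norm_num
  set w : ℂ := z + Complex.I * u with hw
  have hmul : w * (z - Complex.I * u) = 1 := by
    have h : w * (z - Complex.I * u) = z ^ 2 - Complex.I ^ 2 * u ^ 2 := by rw [hw]; ring
    rw [h, Complex.I_sq, hu2]; ring
  have hw0 : w ≠ 0 := by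
    intro h; rw [h, zero_mul] at hmul; exact one_ne_zero hmul.symm
  have hinv : w⁻¹ = z - Complex.I * u := inv_eq_of_mul_eq_one_right hmul
  have hcar : carccos z = -Complex.I * Complex.log w := rfl
  have e1 : Complex.exp (carccos z * Complex.I) = w := by
    rw [hcar]
    have : -Complex.I * Complex.log w * Complex.I = Complex.log w := by
      have := Complex.I_mul_I; ring_nf; rw [Complex.I_sq]; ring
    rw [this, Complex.exp_log hw0]
  have e2 : Complex.exp (-carccos z * Complex.I) = w⁻¹ := by
    rw [neg_mul, Complex.exp_neg, e1]
  rw [Complex.cos, e1, e2, hinv, hw]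
  ring

open Complex Real in
lemma abs_cos_le_cosh (t : ℂ) : ‖Complex.cos t‖ ≤ Real.cosh t.im := by
  rw [Complex.cos]
  calc ‖(Complex.exp (t * Complex.I) + Complex.exp (-t * Complex.I)) / 2‖
      ≤ (‖Complex.exp (t * Complex.I)‖ +
          ‖Complex.exp (-t * Complex.I)‖) / 2 := by
        rw [norm_div]
        simp only [Complex.norm_two]
        gcongr
        exact norm_add_le _ _
    _ = (Real.exp (-t.im) + Real.exp t.im) / 2 := by
        rw [Complex.norm_exp, Complex.norm_exp]
        simp [Complex.mul_re, Complex.neg_re, Complex.neg_im]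
    _ = Real.cosh t.im := by rw [Real.cosh_eq]; ring

lemma abs_sin_le_abs (t : ℝ) : |Real.sin t| ≤ |t| := by
  wlog h : 0 ≤ t with H
  · have := H (-t) (by linarith [lt_of_not_ge h])
    simpa [Real.sin_neg] using this
  rw [abs_of_nonneg h, abs_le]
  constructor
  · rcases le_or_gt t Real.pi with h1 | h1
    · linarith [Real.sin_nonneg_of_nonneg_of_le_pi h h1]
    · have := Real.neg_one_le_sin t
      have : (1:ℝ) ≤ Real.pi := by linarith [Real.pi_gt_three]
      linarith [Real.neg_one_le_sin t]
  · exact Real.sin_le h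

lemma abs_self_le_abs_sinh (y : ℝ) : |y| ≤ |Real.sinh y| := by
  rcases lt_trichotomy y 0 with h | h | h
  · have : -y < Real.sinh (-y) := (Real.self_lt_sinh_iff).2 (by linarith)
    rw [Real.sinh_neg] at this
    rw [abs_of_neg h, abs_of_neg (by nlinarith [Real.sinh_neg y] : Real.sinh y < 0)]
    · linarith
  · simp [h]
  · have := (Real.self_lt_sinh_iff).2 h
    rw [abs_of_pos h, abs_of_pos (by linarith)]
    linarith

lemma cosh_le_exp_abs (t : ℝ) : Real.cosh t ≤ Real.exp |t| := by
  rw [Real.cosh_eq]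
  have h1 : Real.exp t ≤ Real.exp |t| := Real.exp_le_exp.2 (le_abs_self t)
  have h2 : Real.exp (-t) ≤ Real.exp |t| := Real.exp_le_exp.2 (neg_le_abs t)
  linarith

open Complex Real in
lemma im_carccos_le (b : ℝ) (hb : 0 < b) (s : ℝ) (hs : s ≤ b ^ 2) (z : ℂ)
    (hz1 : ‖z‖ ≤ 1) (hz2 : |Complex.arg z| ≤ s) :
    |(carccos z).im| ≤ b := by
  set ζ := carccos z with hζ
  set x := ζ.re
  set y := ζ.im
  have hz : Complex.cos ζ = z := cos_carccos z
  have hdec : Complex.cos ζ = Complex.cos ((x : ℂ) + (y : ℂ) * Complex.I) := by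
    rw [Complex.re_add_im]
  have hcos2 : Complex.cos ((x : ℂ) + (y : ℂ) * Complex.I) =
      ((Real.cos x * Real.cosh y : ℝ) : ℂ) +
        ((-(Real.sin x * Real.sinh y) : ℝ) : ℂ) * Complex.I := by
    rw [Complex.cos_add, Complex.cos_mul_I, Complex.sin_mul_I,
      ← Complex.ofReal_cos, ← Complex.ofReal_sin, ← Complex.ofReal_cosh, ← Complex.ofReal_sinh]
    push_cast
    ring
  have hzeq : z = ((Real.cos x * Real.cosh y : ℝ) : ℂ) +
      ((-(Real.sin x * Real.sinh y) : ℝ) : ℂ) * Complex.I := by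
    rw [← hz, hdec, hcos2]
  have hre : z.re = Real.cos x * Real.cosh y := by
    rw [hzeq, Complex.add_re, Complex.mul_re, Complex.ofReal_re, Complex.ofReal_im,
      Complex.I_re, Complex.I_im, Complex.ofReal_re]
    ring
  have him : z.im = -(Real.sin x * Real.sinh y) := by
    rw [hzeq, Complex.add_im, Complex.mul_im, Complex.ofReal_re, Complex.ofReal_im,
      Complex.I_re, Complex.I_im, Complex.ofReal_im]
    ring
  have hnorm : z.re ^ 2 + z.im ^ 2 ≤ 1 := by
    have h := Complex.sq_norm z
    rw [Complex.normSq_apply] at h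
    nlinarith [norm_nonneg z, mul_self_nonneg (1 - ‖z‖)]
  have hsq : Real.sinh y ^ 2 ≤ Real.sin x ^ 2 := by
    rw [hre, him] at hnorm
    have hcc : (Real.cos x * Real.cosh y) ^ 2 = Real.cos x ^ 2 * (Real.sinh y ^ 2 + 1) := by
      rw [mul_pow, Real.cosh_sq]
    nlinarith [Real.sin_sq_add_cos_sq x, sq_nonneg (Real.sinh y), sq_nonneg (Real.sin x)]
  have hs0 : 0 ≤ s := le_trans (abs_nonneg _) hz2
  have himle : |z.im| ≤ s := by
    have h1 := Complex.norm_mul_sin_arg z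
    have h2 := abs_sin_le_abs (Complex.arg z)
    calc |z.im| = ‖z‖ * |Real.sin (Complex.arg z)| := by
          rw [← h1, abs_mul, _root_.abs_of_nonneg (norm_nonneg z)]
      _ ≤ 1 * s := by
          apply mul_le_mul hz1 (le_trans h2 hz2) (abs_nonneg _) zero_le_one
      _ = s := one_mul s
  have hprod : (Real.sin x * Real.sinh y) ^ 2 ≤ s ^ 2 := by
    rw [him, abs_neg] at himle
    nlinarith [abs_nonneg (Real.sin x * Real.sinh y),
      _root_.sq_abs (Real.sin x * Real.sinh y), himle, hs0]
  have h4 : Real.sinh y ^ 2 * Real.sinh y ^ 2 ≤ b ^ 2 * b ^ 2 := by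
    nlinarith [sq_nonneg (Real.sinh y), hs0, hsq, hprod]
  have h5 : Real.sinh y ^ 2 ≤ b ^ 2 := by
    nlinarith [sq_nonneg (Real.sinh y), sq_nonneg b, sq_nonneg (Real.sinh y ^ 2 - b ^ 2)]
  have h6 : |Real.sinh y| ≤ b := by
    nlinarith [abs_nonneg (Real.sinh y), _root_.sq_abs (Real.sinh y)]
  exact le_trans (abs_self_le_abs_sinh y) h6

theorem monic_chebyshev_sector_bound (p : ℝ) (hp : p ∈ Set.Ioo (0 : ℝ) 1)
    (s : ℝ) (hs : s ≤ ((1 - p) / 12) ^ 2) :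
    ∃ N : ℕ, ∀ n : ℕ, N ≤ n → ∀ z : ℂ,
      ‖z‖ ≤ 1 → |Complex.arg z| ≤ s →
      ‖(2 : ℂ) ^ (1 - (n : ℤ)) * Complex.cos (n * carccos z)‖ ≤
        (2 : ℝ) ^ (-(p * n)) := by
  obtain ⟨hp0, hp1⟩ := hp
  set b : ℝ := (1 - p) / 12 with hbdef
  have hb : 0 < b := by rw [hbdef]; linarith
  set c : ℝ := (1 - p) * (Real.log 2 - 1 / 12) with hcdef
  have hlog2 : (0.6931471803 : ℝ) < Real.log 2 := Real.log_two_gt_d9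
  have hc : 0 < c := by
    rw [hcdef]
    apply mul_pos (by linarith)
    linarith
  refine ⟨⌈Real.log 2 / c⌉₊, fun n hn z hz1 hz2 => ?_⟩
  have hnc : Real.log 2 ≤ n * c := by
    have h1 : Real.log 2 / c ≤ (⌈Real.log 2 / c⌉₊ : ℝ) := Nat.le_ceil _
    have h2 : ((⌈Real.log 2 / c⌉₊ : ℕ) : ℝ) ≤ (n : ℝ) := by exact_mod_cast hn
    rw [div_le_iff₀ hc] at h1
    nlinarith
  have hy : |(carccos z).im| ≤ b := im_carccos_le b hb s hs z hz1 hz2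
  -- split the absolute value
  rw [norm_mul]
  have habs2 : ‖(2 : ℂ) ^ (1 - (n : ℤ))‖ = (2 : ℝ) ^ (1 - (n : ℤ)) := by
    rw [norm_zpow, Complex.norm_two]
  rw [habs2]
  -- bound the cosine factor
  have him : ((n : ℂ) * carccos z).im = n * (carccos z).im := by
    simp [Complex.mul_im]
  have hcosb : ‖Complex.cos ((n : ℂ) * carccos z)‖ ≤ Real.exp (n * b) := by
    calc ‖Complex.cos ((n : ℂ) * carccos z)‖
        ≤ Real.cosh (((n : ℂ) * carccos z).im) := abs_cos_le_cosh _
      _ ≤ Real.exp |((n : ℂ) * carccos z).im| := cosh_le_exp_abs _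
      _ ≤ Real.exp (n * b) := by
          apply Real.exp_le_exp.2
          rw [him, abs_mul, Nat.abs_cast]
          exact mul_le_mul_of_nonneg_left hy (Nat.cast_nonneg n)
  -- now the numeric bound
  have hzpow : ((2 : ℝ) ^ (1 - (n : ℤ)) : ℝ) = Real.exp (Real.log 2 * (1 - (n : ℝ))) := by
    rw [← Real.rpow_intCast 2 (1 - (n : ℤ)), Real.rpow_def_of_pos (by norm_num)]
    push_cast
    ring_nf
  have hrpow : ((2 : ℝ) ^ (-(p * n)) : ℝ) = Real.exp (Real.log 2 * (-(p * n))) := by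
    rw [Real.rpow_def_of_pos (by norm_num)]
  have hpos : (0 : ℝ) < (2 : ℝ) ^ (1 - (n : ℤ)) := by positivity
  calc (2 : ℝ) ^ (1 - (n : ℤ)) * ‖Complex.cos ((n : ℂ) * carccos z)‖
      ≤ (2 : ℝ) ^ (1 - (n : ℤ)) * Real.exp (n * b) :=
        mul_le_mul_of_nonneg_left hcosb (le_of_lt hpos)
    _ = Real.exp (Real.log 2 * (1 - (n : ℝ)) + n * b) := by
        rw [hzpow, ← Real.exp_add]
    _ ≤ Real.exp (Real.log 2 * (-(p * n))) := by
        apply Real.exp_le_exp.2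
        rw [hbdef]
        rw [hcdef] at hnc
        nlinarith
    _ = (2 : ℝ) ^ (-(p * n)) := hrpow.symm
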